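/- Let n ≥ 3 be odd and q ∈ k a primitive n-th root of unity. Let A = k[u]/(u^n − 1) carry the u_q(sl₂)-module-algebra structure (κ, e, f) with κ(u) = q²·u, f(u) = γ·1_A, e(u) = δ·u², where γ, δ ∈ k are nonzero with γδ = −q. If (T_a, T_b, T_c, T_d) is an extension of this action to a D(u_q(sl₂))-module-algebra structure on A, then exactly one of the following holds: (i) T_a(u) = q·u, T_b(u) = γ(q − q^{-1})·1_A, T_c(u) = 0, T_d(u) = q^{-1}·u; or (ii) T_a(u) = q^{-1}·u, T_b(u) = 0, T_c(u) = γ^{-1}(q − q^{-1})·u², T_d(u) = q·u. -/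

import Mathlib

/-- The data of an extension of a `u_q(sl₂)`-module-algebra structure `(κ, e, f)` on `A`
to a `D(u_q(sl₂))`-module-algebra structure, given by the actions `Ta, Tb, Tc, Td` of the
dual generators `a, b, c, d` of the Drinfel'd double. -/
def IsDUqExtension {k A : Type*} [Field k] [CommRing A] [Algebra k A]
    (n : ℕ) (q : k) (κ : A ≃ₐ[k] A) (e f : A →ₗ[k] A)
    (Ta Tb Tc Td : A →ₗ[k] A) : Prop :=
  Ta 1 = 1 ∧ Td 1 = 1 ∧ Tb 1 = 0 ∧ Tc 1 = 0 ∧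
  (∀ v w : A, Ta (v * w) = Ta v * Ta w + Tc v * Tb w) ∧
  (∀ v w : A, Tb (v * w) = Tb v * Ta w + Td v * Tb w) ∧
  (∀ v w : A, Tc (v * w) = Ta v * Tc w + Tc v * Td w) ∧
  (∀ v w : A, Td (v * w) = Tb v * Tc w + Td v * Td w) ∧
  Ta ^ n = 1 ∧ Td ^ n = 1 ∧ Tb ^ n = 0 ∧ Tc ^ n = 0 ∧
  Tb ∘ₗ Ta = q • (Ta ∘ₗ Tb) ∧
  Td ∘ₗ Tb = q • (Tb ∘ₗ Td) ∧
  Tc ∘ₗ Ta = q • (Ta ∘ₗ Tc) ∧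
  Td ∘ₗ Tc = q • (Tc ∘ₗ Td) ∧
  Tb ∘ₗ Tc = Tc ∘ₗ Tb ∧
  Ta ∘ₗ Td = q⁻¹ • (Tb ∘ₗ Tc) + LinearMap.id ∧
  κ.toLinearMap ∘ₗ Ta = Ta ∘ₗ κ.toLinearMap ∧
  κ.toLinearMap ∘ₗ Tb = (q⁻¹) ^ 2 • (Tb ∘ₗ κ.toLinearMap) ∧
  κ.toLinearMap ∘ₗ Tc = q ^ 2 • (Tc ∘ₗ κ.toLinearMap) ∧
  κ.toLinearMap ∘ₗ Td = Td ∘ₗ κ.toLinearMap ∧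
  e ∘ₗ Ta = q⁻¹ • (Ta ∘ₗ e) - q⁻¹ • Tc ∧
  e ∘ₗ Tb = q⁻¹ • (Tb ∘ₗ e) + q⁻¹ • (Ta ∘ₗ κ.toLinearMap) - q⁻¹ • Td ∧
  e ∘ₗ Tc = q • (Tc ∘ₗ e) ∧
  e ∘ₗ Td = q • (Td ∘ₗ e) + q • (Tc ∘ₗ κ.toLinearMap) ∧
  f ∘ₗ Ta = q⁻¹ • (Ta ∘ₗ f) + Tb ∧
  f ∘ₗ Tb = q • (Tb ∘ₗ f) ∧
  f ∘ₗ Tc = q⁻¹ • (Tc ∘ₗ f) - Ta ∘ₗ (κ⁻¹ : A ≃ₐ[k] A).toLinearMap + Td ∧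
  f ∘ₗ Td = q • (Td ∘ₗ f) - q ^ 2 • (Tb ∘ₗ (κ⁻¹ : A ≃ₐ[k] A).toLinearMap)

/-- Theorem 5.7 (uniqueness): any extension of the `u_q(sl₂)`-module-algebra structure on
`A = k[u]/(uⁿ - 1)` to a `D(u_q(sl₂))`-module-algebra structure satisfies exactly one of
the two prescriptions (i) or (ii). -/
theorem stmt_16 (k : Type*) [Field k] [IsAlgClosed k] [CharZero k]
    (n : ℕ) (hn : 3 ≤ n) (hodd : Odd n)
    (q : k) (hq : IsPrimitiveRoot q n)
    (A : Type*) [CommRing A] [Algebra k A]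
    (u : A) (b : Module.Basis (Fin n) k A) (hb : ∀ i : Fin n, b i = u ^ (i : ℕ))
    (hu : u ^ n = 1)
    (κ : A ≃ₐ[k] A) (e f : A →ₗ[k] A)
    (hκn : κ ^ n = 1)
    (he1 : e 1 = 0) (hf1 : f 1 = 0)
    (heab : ∀ a c : A, e (a * c) = κ a * e c + e a * c)
    (hfab : ∀ a c : A, f (a * c) = a * f c + f a * κ⁻¹ c)
    (hen : e ^ n = 0) (hfn : f ^ n = 0)
    (hκe : κ.toLinearMap ∘ₗ e = q ^ 2 • (e ∘ₗ κ.toLinearMap))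
    (hκf : κ.toLinearMap ∘ₗ f = (q⁻¹) ^ 2 • (f ∘ₗ κ.toLinearMap))
    (hef : (q - q⁻¹) • (e ∘ₗ f - f ∘ₗ e) =
      κ.toLinearMap - (κ⁻¹ : A ≃ₐ[k] A).toLinearMap)
    (γ δ : k) (hγ : γ ≠ 0) (hδ : δ ≠ 0) (hγδ : γ * δ = -q)
    (hκu : κ u = q ^ 2 • u) (hfu : f u = γ • (1 : A)) (heu : e u = δ • u ^ 2)
    :
    ∀ (Ta Tb Tc Td : A →ₗ[k] A),
      IsDUqExtension n q κ e f Ta Tb Tc Td →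
      Xor'
        (Ta u = q • u ∧ Tb u = (γ * (q - q⁻¹)) • (1 : A) ∧
          Tc u = 0 ∧ Td u = q⁻¹ • u)
        (Ta u = q⁻¹ • u ∧ Tb u = 0 ∧
          Tc u = (γ⁻¹ * (q - q⁻¹)) • u ^ 2 ∧ Td u = q • u) := by
  intro Ta Tb Tc Td hext
  obtain ⟨hTa1, hTd1, hTb1, hTc1, hPa, hPb, hPc, hPd, hTan, hTdn, hTbn, hTcn,
    hba, hdb, hca, hdc, hbc, had, hκa, hκb, hκc, hκd, hea, heb, hec, hed,
    hfa, hfb, hfc, hfd⟩ := hext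
  have hn0 : 0 < n := by omega
  have hq0 : q ≠ 0 := hq.ne_zero hn0.ne'
  have hq21 : q ^ 2 ≠ 1 := hq.pow_ne_one_of_pos_of_lt (by norm_num) (by omega)
  have hqq : q⁻¹ * q = 1 := inv_mul_cancel₀ hq0
  have h0lt : (0:ℕ) < n := hn0
  have h1lt : (1:ℕ) < n := by omega
  have h2lt : (2:ℕ) < n := by omega
  have hκpow : ∀ m : ℕ, κ (u ^ m) = q ^ (2 * m) • u ^ m := by
    intro m
    rw [map_pow, hκu, smul_pow, ← pow_mul]
  have hexp : ∀ i j : Fin n, q ^ (2 * (i:ℕ)) = q ^ (2 * (j:ℕ)) → i = j := by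
    have key : ∀ a c : ℕ, a < n → c < n → a ≤ c → q ^ (2*a) = q ^ (2*c) → a = c := by
      intro a c ha hc hac h
      have h1 : q ^ (2*a) * q ^ (2*(c-a)) = q ^ (2*a) * 1 := by
        rw [mul_one, ← pow_add, h]
        congr 1
        omega
      have h2 : q ^ (2*(c-a)) = 1 := mul_left_cancel₀ (pow_ne_zero _ hq0) h1
      have h3 : n ∣ 2*(c-a) := hq.dvd_of_pow_eq_one _ h2
      have h4 : n ∣ (c-a) := Nat.Coprime.dvd_of_dvd_mul_left (hodd.coprime_two_right) h3
      have h5 : c - a = 0 := Nat.eq_zero_of_dvd_of_lt h4 (by omega)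
      omega
    intro i j h
    rcases le_total (i:ℕ) (j:ℕ) with hij | hij
    · exact Fin.ext (key _ _ i.isLt j.isLt hij h)
    · exact (Fin.ext (key _ _ j.isLt i.isLt hij h.symm)).symm
  have heig : ∀ (x : A) (m : Fin n), κ x = q ^ (2 * (m:ℕ)) • x → ∃ s : k, x = s • u ^ (m:ℕ) := by
    intro x m hx
    refine ⟨b.repr x m, ?_⟩
    have e1 : x = ∑ j : Fin n, b.repr x j • b j := (b.sum_repr x).symm
    have e2 : κ x = ∑ j : Fin n, (q ^ (2*(j:ℕ)) * b.repr x j) • b j := by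
      conv_lhs => rw [e1]
      rw [map_sum]
      refine Finset.sum_congr rfl fun j _ => ?_
      rw [map_smul, hb, hκpow, smul_smul, mul_comm]
    have e3 : κ x = ∑ j : Fin n, (q ^ (2*(m:ℕ)) * b.repr x j) • b j := by
      rw [hx]
      conv_lhs => rw [e1]
      rw [Finset.smul_sum]
      exact Finset.sum_congr rfl fun j _ => (smul_smul _ _ _)
    have e4 : ∀ j : Fin n, q ^ (2*(j:ℕ)) * b.repr x j = q ^ (2*(m:ℕ)) * b.repr x j := by
      intro j
      have h5 := e2.symm.trans e3
      have r1 : b.repr (∑ i : Fin n, (q ^ (2*(i:ℕ)) * b.repr x i) • b i) j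
          = q ^ (2*(j:ℕ)) * b.repr x j := by
        simp [Finsupp.finset_sum_apply, Module.Basis.repr_self, Finsupp.single_apply]
      have r2 : b.repr (∑ i : Fin n, (q ^ (2*(m:ℕ)) * b.repr x i) • b i) j
          = q ^ (2*(m:ℕ)) * b.repr x j := by
        simp [Finsupp.finset_sum_apply, Module.Basis.repr_self, Finsupp.single_apply]
      rw [← r1, ← r2, h5]
    have e5 : ∀ j : Fin n, j ≠ m → b.repr x j = 0 := by
      intro j hj
      have h6 := e4 j
      have hne : q ^ (2*(j:ℕ)) ≠ q ^ (2*(m:ℕ)) := fun hcon => hj (hexp _ _ hcon)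
      have h7 : (q ^ (2*(j:ℕ)) - q ^ (2*(m:ℕ))) * b.repr x j = 0 := by
        linear_combination h6
      rcases mul_eq_zero.mp h7 with h8 | h8
      · exact absurd (sub_eq_zero.mp h8) hne
      · exact h8
    conv_lhs => rw [e1]
    rw [Finset.sum_eq_single m (fun j _ hj => by rw [e5 j hj, zero_smul])
      (fun h => absurd (Finset.mem_univ m) h), hb]
  have hune : ∀ m : ℕ, m < n → u ^ m ≠ 0 := by
    intro m hm
    have h := b.ne_zero ⟨m, hm⟩
    rwa [hb] at h
  have hcanc : ∀ (s t : k) (m : ℕ), m < n → s • u ^ m = t • u ^ m → s = t := by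
    intro s t m hm h
    have h2 : (s - t) • u ^ m = 0 := by rw [sub_smul, h, sub_self]
    rcases smul_eq_zero.mp h2 with h3 | h3
    · exact sub_eq_zero.mp h3
    · exact absurd h3 (hune m hm)
  -- extract the forms of Ta u, Tb u, Tc u, Td u
  have hκau : κ (Ta u) = q ^ (2*1) • Ta u := by
    have h := LinearMap.congr_fun hκa u
    simp only [LinearMap.comp_apply, AlgEquiv.toLinearMap_apply] at h
    rw [h, hκu, map_smul]
  obtain ⟨α, hA0⟩ := heig (Ta u) ⟨1, h1lt⟩ hκau
  have hA : Ta u = α • u := by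
    have h : Ta u = α • u ^ 1 := hA0
    rwa [pow_one] at h
  have hκdu : κ (Td u) = q ^ (2*1) • Td u := by
    have h := LinearMap.congr_fun hκd u
    simp only [LinearMap.comp_apply, AlgEquiv.toLinearMap_apply] at h
    rw [h, hκu, map_smul]
  obtain ⟨d, hD0⟩ := heig (Td u) ⟨1, h1lt⟩ hκdu
  have hD : Td u = d • u := by
    have h : Td u = d • u ^ 1 := hD0
    rwa [pow_one] at h
  have hκbu : κ (Tb u) = q ^ (2*0) • Tb u := by
    have h := LinearMap.congr_fun hκb u
    simp only [LinearMap.comp_apply, LinearMap.smul_apply, AlgEquiv.toLinearMap_apply] at h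
    have h2 : (q⁻¹:k)^2 * q^2 = q ^ (2*0) := by
      norm_num
      field_simp
    rw [h, hκu, map_smul, smul_smul, h2]
  obtain ⟨β, hB0⟩ := heig (Tb u) ⟨0, h0lt⟩ hκbu
  have hB : Tb u = β • (1:A) := by
    have h : Tb u = β • u ^ 0 := hB0
    rwa [pow_zero] at h
  have hκcu : κ (Tc u) = q ^ (2*2) • Tc u := by
    have h := LinearMap.congr_fun hκc u
    simp only [LinearMap.comp_apply, LinearMap.smul_apply, AlgEquiv.toLinearMap_apply] at h
    have h2 : (q:k)^2 * q^2 = q ^ (2*2) := by ring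
    rw [h, hκu, map_smul, smul_smul, h2]
  obtain ⟨c, hC0⟩ := heig (Tc u) ⟨2, h2lt⟩ hκcu
  have hC : Tc u = c • u ^ 2 := hC0
  -- values on u^2
  have hA2 : Ta (u^2) = (α*α + c*β) • u^2 := by
    rw [pow_two, hPa u u, hA, hB, hC, smul_mul_smul_comm, smul_mul_smul_comm, mul_one]
    simp only [← pow_two]
    rw [← add_smul]
  have hB2 : Tb (u^2) = (β*α + d*β) • u := by
    rw [pow_two, hPb u u, hA, hB, hD, smul_mul_smul_comm, smul_mul_smul_comm, mul_one,
      one_mul, ← add_smul]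
  have hD2 : Td (u^2) = (β*c + d*d) • u^2 := by
    rw [pow_two, hPd u u, hB, hC, hD, smul_mul_smul_comm, smul_mul_smul_comm, one_mul]
    simp only [← pow_two]
    rw [← add_smul]
  have hκinv : (κ⁻¹ : A ≃ₐ[k] A) u = (q^2)⁻¹ • u := by
    have h1 : κ ((q^2)⁻¹ • u) = u := by
      rw [map_smul, hκu, smul_smul, inv_mul_cancel₀ (pow_ne_zero 2 hq0), one_smul]
    have h2 : (κ.symm) (κ ((q^2)⁻¹ • u)) = (q^2)⁻¹ • u := κ.symm_apply_apply _
    rw [h1] at h2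
    exact h2
  -- the five scalar equations
  have hfa' := LinearMap.congr_fun hfa u
  have hfd' := LinearMap.congr_fun hfd u
  have hea' := LinearMap.congr_fun hea u
  have had' := LinearMap.congr_fun had u
  have hed' := LinearMap.congr_fun hed u
  simp only [LinearMap.comp_apply, LinearMap.add_apply, LinearMap.sub_apply,
    LinearMap.smul_apply, LinearMap.id_apply, AlgEquiv.toLinearMap_apply]
    at hfa' hfd' hea' had' hed'
  have h1 : α*γ = q⁻¹*γ + β := by
    apply hcanc _ _ 0 h0lt
    rw [pow_zero]
    calc (α*γ) • (1:A) = f (Ta u) := by rw [hA, map_smul, hfu, smul_smul]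
      _ = q⁻¹ • Ta (f u) + Tb u := hfa'
      _ = (q⁻¹*γ + β) • 1 := by rw [hfu, map_smul, hTa1, hB, smul_smul, add_smul]
  have h4eq : d*γ = q*γ - q^2*(q^2)⁻¹*β := by
    apply hcanc _ _ 0 h0lt
    rw [pow_zero]
    calc (d*γ) • (1:A) = f (Td u) := by rw [hD, map_smul, hfu, smul_smul]
      _ = q • Td (f u) - q^2 • Tb ((κ⁻¹ : A ≃ₐ[k] A) u) := hfd'
      _ = (q*γ - q^2*(q^2)⁻¹*β) • 1 := by
          rw [hfu, map_smul, hTd1, hκinv, map_smul, hB, smul_smul, smul_smul, smul_smul,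
            sub_smul]
  have hq2i : q^2*(q^2)⁻¹ = 1 := mul_inv_cancel₀ (pow_ne_zero 2 hq0)
  have H4 : d*γ = q*γ - β := by linear_combination h4eq - β * hq2i
  have h2 : α*δ = q⁻¹*δ*(α*α+c*β) - q⁻¹*c := by
    apply hcanc _ _ 2 h2lt
    calc (α*δ) • u^2 = e (Ta u) := by rw [hA, map_smul, heu, smul_smul]
      _ = q⁻¹ • Ta (e u) - q⁻¹ • Tc u := hea'
      _ = (q⁻¹*δ*(α*α+c*β) - q⁻¹*c) • u^2 := by
          rw [heu, map_smul, hA2, hC, smul_smul, smul_smul, smul_smul, sub_smul]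
  have h3 : d*α = q⁻¹*c*(β*α+d*β) + 1 := by
    apply hcanc _ _ 1 h1lt
    rw [pow_one]
    calc (d*α) • u = Ta (Td u) := by rw [hD, map_smul, hA, smul_smul]
      _ = q⁻¹ • Tb (Tc u) + u := had'
      _ = (q⁻¹*c*(β*α+d*β) + 1) • u := by
          rw [hC, map_smul, hB2, smul_smul, smul_smul, add_smul, one_smul]
  have h5 : d*δ = q*δ*(β*c+d*d) + q*q^2*c := by
    apply hcanc _ _ 2 h2lt
    calc (d*δ) • u^2 = e (Td u) := by rw [hD, map_smul, heu, smul_smul]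
      _ = q • Td (e u) + q • Tc (κ u) := hed'
      _ = (q*δ*(β*c+d*d) + q*q^2*c) • u^2 := by
          rw [heu, map_smul, hD2, hκu, map_smul, hC, smul_smul, smul_smul, smul_smul,
            smul_smul, add_smul]
  -- cleared polynomial versions
  have H1 : α*γ*q = γ + β*q := by linear_combination q * h1 + γ * hqq
  have H2 : α*δ*q = δ*(α*α+c*β) - c := by
    linear_combination q * h2 + (δ*(α*α+c*β) - c) * hqq
  have H3 : d*α*q = c*(β*α+d*β) + q := by
    linear_combination q * h3 + (c*(β*α+d*β)) * hqq
  have H5 : d*δ = q*(δ*(β*c+d*d)) + q^3*c := by linear_combination h5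
  have hbq : β*q = α*γ*q - γ := by linear_combination -H1
  have hdq : d*q = q^2 + 1 - α*q := by
    have hx : γ*(d*q) = γ*(q^2+1-α*q) := by linear_combination q * H4 + H1
    exact mul_left_cancel₀ hγ hx
  have hs1 : δ*β*q = q - q^2*α := by linear_combination δ * hbq + (α*q-1) * hγδ
  have hstar : α*(δ*q - δ*α + c*q) = 0 := by
    have hq' : q*(α*(δ*q - δ*α + c*q)) = 0 := by linear_combination q * H2 + c * hs1
    exact (mul_eq_zero.mp hq').resolve_left hq0
  -- distinctness helpers
  have hsub : q - q⁻¹ ≠ 0 := by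
    intro h
    apply hq21
    have h0 : (q - q⁻¹)*q = 0 := by rw [h, zero_mul]
    linear_combination h0 + hqq
  have hcoef : γ⁻¹*(q-q⁻¹) ≠ 0 := mul_ne_zero (inv_ne_zero hγ) hsub
  by_cases hα0 : α = 0
  · exfalso
    subst hα0
    have e1 : c*d*β = -q := by linear_combination -H3
    have e2 : γ*c*(q^2+1) = q^3 := by
      linear_combination (-(q^2)) * e1 + (c*β*q) * hdq + (c*(q^2+1)) * hbq
    have i1 : δ*β = 1 := by
      apply mul_right_cancel₀ hq0
      linear_combination hs1
    have i2 : d*q = q^2+1 := by linear_combination hdq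
    have R : (q^2+1)*q*δ = q^3*c + q*δ*(q^2+1)^2 + q^5*c := by
      linear_combination q^2 * H5 + (q^3*c) * i1 + (q*δ*(d*q + q^2)) * i2
    have e3 : q^4 = 0 := by
      linear_combination γ * R + (q*(q^2+1)^2 - q*(q^2+1)) * hγδ + q^3 * e2
    exact absurd e3 (pow_ne_zero 4 hq0)
  · have hstar2 : δ*q - δ*α + c*q = 0 := (mul_eq_zero.mp hstar).resolve_left hα0
    have hcq : c*q = δ*α - δ*q := by linear_combination hstar2
    have j1 : c*β*q^2 = -q*((α-q)*(α*q-1)) := by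
      have hj : (c*q)*(β*q) = (δ*α-δ*q)*(α*γ*q-γ) := by rw [hcq, hbq]
      linear_combination hj + ((α-q)*(α*q-1)) * hγδ
    have j2 : c*d*β*q^3 = -q*((α-q)*(α*q-1))*(q^2+1-α*q) := by
      have hj : (c*β*q^2)*(d*q) = (-q*((α-q)*(α*q-1)))*(q^2+1-α*q) := by rw [j1, hdq]
      linear_combination hj
    have key : (α - q)*(α*q - 1) = 0 := by
      have hk : q*((α - q)*(α*q - 1)) = 0 := by
        linear_combination q^3 * H3 + (-(α*q^3)) * hdq + (α*q) * j1 + j2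
      exact (mul_eq_zero.mp hk).resolve_left hq0
    rcases mul_eq_zero.mp key with hαq | hαq
    · -- case (i): α = q
      have hαv : α = q := by linear_combination hαq
      have hcv : c = 0 := by
        have h0 : c*q = 0 := by linear_combination hcq + δ * hαv
        exact (mul_eq_zero.mp h0).resolve_right hq0
      have hβv : β = γ*(q - q⁻¹) := by
        apply mul_right_cancel₀ hq0
        linear_combination hbq + γ * hqq + γ*q * hαv
      have hdv : d = q⁻¹ := by
        apply mul_right_cancel₀ hq0
        linear_combination hdq - hqq - q * hαv
      have hP1 : Ta u = q • u ∧ Tb u = (γ * (q - q⁻¹)) • (1 : A) ∧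
          Tc u = 0 ∧ Td u = q⁻¹ • u := by
        refine ⟨by rw [hA, hαv], ?_, ?_, ?_⟩
        · rw [hB, hβv]
        · rw [hC, hcv, zero_smul]
        · rw [hD, hdv]
      refine Or.inl ⟨hP1, ?_⟩
      rintro ⟨-, -, hc2, -⟩
      rw [hP1.2.2.1] at hc2
      rcases smul_eq_zero.mp hc2.symm with h8 | h8
      · exact hcoef h8
      · exact hune 2 h2lt h8
    · -- case (ii): α = q⁻¹
      have hαv : α = q⁻¹ := by
        field_simp
        linear_combination hαq
      subst hαv
      have hβv : β = 0 := by
        have h0 : β*q = 0 := by linear_combination hbq + γ * hqq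
        exact (mul_eq_zero.mp h0).resolve_right hq0
      have hdv : d = q := by
        apply mul_right_cancel₀ hq0
        linear_combination hdq - hqq
      have hγγ : γ⁻¹*γ = 1 := inv_mul_cancel₀ hγ
      have hcv : c = γ⁻¹*(q-q⁻¹) := by
        apply mul_right_cancel₀ hq0
        apply mul_left_cancel₀ hγ
        linear_combination γ * hcq + (q⁻¹ - q) * hγδ + (q⁻¹*q - q^2) * hγγ
      have hP2 : Ta u = q⁻¹ • u ∧ Tb u = 0 ∧
          Tc u = (γ⁻¹ * (q - q⁻¹)) • u ^ 2 ∧ Td u = q • u := by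
        refine ⟨hA, ?_, ?_, ?_⟩
        · rw [hB, hβv, zero_smul]
        · rw [hC, hcv]
        · rw [hD, hdv]
      refine Or.inr ⟨hP2, ?_⟩
      rintro ⟨-, -, hc2, -⟩
      rw [hP2.2.2.1] at hc2
      rcases smul_eq_zero.mp hc2 with h8 | h8
      · exact hcoef h8
      · exact hune 2 h2lt h8
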